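/- Assume Z_0 := Σ_{ζ∈Λ} ∫ exp(−U(ζ,q)) dμ(q) is finite and positive, fix λ ∈ Λ, and assume 𝕘_a^λ and 𝕘_a are square-integrable for E_a. Then: (i) E_a[𝕟_a^λ] = E_a[𝕘_a^λ] and E_a[𝕟_a] = E_a[𝕘_a]; (ii) the law of total variance gives Var_a[(ζ,q) ↦ 𝕘_a^λ(ζ,q)/E_a[𝕘_a^λ] − 𝕘_a(ζ,q)/E_a[𝕘_a]] = E_a^𝒬[q ↦ Var_a[(ζ,q) ↦ 𝕘_a^λ(ζ,q)/E_a[𝕘_a^λ] − 𝕘_a(ζ,q)/E_a[𝕘_a] | q]] + Var_a[q ↦ 𝕟_a^λ(q)/E_a[𝕟_a^λ] − 𝕟_a(q)/E_a[𝕟_a]]; and (iii) if the expected conditional variance in (ii) is strictly positive, then Var_a[𝕟_a^λ/E_a[𝕟_a^λ] − 𝕟_a/E_a[𝕟_a]] < Var_a[𝕘_a^λ/E_a[𝕘_a^λ] − 𝕘_a/E_a[𝕘_a]]; hence the asymptotic variance of the adiabatic reweighting free energy estimator is strictly smaller than that of the thermodynamic occupation and free energy perturbation estimators. -/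

import Mathlib

open MeasureTheory Real Finset

namespace ExpandedEnsemble

variable {Λ Q : Type*}

/-- Partition function of the expanded ensemble with biasing potential `a`. -/
noncomputable def Za [Fintype Λ] [MeasurableSpace Q] (μ : Measure Q)
    (U : Λ → Q → ℝ) (a : Λ → ℝ) : ℝ :=
  ∑ ζ : Λ, ∫ q, Real.exp (a ζ - U ζ q) ∂μ

/-- Expanded-ensemble probability density `p_a(ζ,q) = exp(a(ζ) − U(ζ,q))/Z_a`. -/
noncomputable def pEE [Fintype Λ] [MeasurableSpace Q] (μ : Measure Q)
    (U : Λ → Q → ℝ) (a : Λ → ℝ) (ζ : Λ) (q : Q) : ℝ :=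
  Real.exp (a ζ - U ζ q) / Za μ U a

/-- Expectation `E_a[F] = Σ_ζ ∫ F(ζ,q) p_a(ζ,q) dμ(q)` in the expanded ensemble. -/
noncomputable def Ea [Fintype Λ] [MeasurableSpace Q] (μ : Measure Q)
    (U : Λ → Q → ℝ) (a : Λ → ℝ) (F : Λ → Q → ℝ) : ℝ :=
  ∑ ζ : Λ, ∫ q, F ζ q * pEE μ U a ζ q ∂μ

/-- Marginal probability of the external parameter, `p_a^Λ(λ) = ∫ p_a(λ,q) dμ(q)`. -/
noncomputable def pLam [Fintype Λ] [MeasurableSpace Q] (μ : Measure Q)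
    (U : Λ → Q → ℝ) (a : Λ → ℝ) (l : Λ) : ℝ :=
  ∫ q, pEE μ U a l q ∂μ

/-- Marginal probability of the configuration, `p_a^𝒬(q) = Σ_ζ p_a(ζ,q)`. -/
noncomputable def pQm [Fintype Λ] [MeasurableSpace Q] (μ : Measure Q)
    (U : Λ → Q → ℝ) (a : Λ → ℝ) (q : Q) : ℝ :=
  ∑ ζ : Λ, pEE μ U a ζ q

/-- Generic weighing function `g_a^λ(ζ,q) = (p_a(λ,q)/p_a(ζ,q)) K(λ,ζ)`. -/
noncomputable def gW [Fintype Λ] [MeasurableSpace Q] (μ : Measure Q)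
    (U : Λ → Q → ℝ) (a : Λ → ℝ) (K : Λ → Λ → ℝ) (l ζ : Λ) (q : Q) : ℝ :=
  (pEE μ U a l q / pEE μ U a ζ q) * K l ζ

/-- Conditional probability of `λ` given `q`:
`π_a^λ(q) = exp(a(λ) − U(λ,q)) / Σ_ζ exp(a(ζ) − U(ζ,q))`. -/
noncomputable def piL [Fintype Λ] (U : Λ → Q → ℝ) (a : Λ → ℝ) (l : Λ) (q : Q) : ℝ :=
  Real.exp (a l - U l q) / ∑ ζ : Λ, Real.exp (a ζ - U ζ q)

/-- Conditional expectation of the observable given `λ`: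
`E[O|λ] = ∫ O(λ,q) π(q|λ) dμ(q)` with `π(q|λ) = p_a(λ,q)/p_a^Λ(λ)`. -/
noncomputable def condE [Fintype Λ] [MeasurableSpace Q] (μ : Measure Q)
    (U : Λ → Q → ℝ) (a : Λ → ℝ) (O : Λ → Q → ℝ) (l : Λ) : ℝ :=
  ∫ q, O l q * (pEE μ U a l q / pLam μ U a l) ∂μ

/-- Variance `Var_a[F] = E_a[F²] − (E_a[F])²`. -/
noncomputable def VarA [Fintype Λ] [MeasurableSpace Q] (μ : Measure Q)
    (U : Λ → Q → ℝ) (a : Λ → ℝ) (F : Λ → Q → ℝ) : ℝ :=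
  Ea μ U a (fun ζ q => F ζ q ^ 2) - (Ea μ U a F) ^ 2

/-- Conditional weight `w_a(ζ,q) = p_a(ζ,q)/p_a^𝒬(q)`. -/
noncomputable def wA [Fintype Λ] [MeasurableSpace Q] (μ : Measure Q)
    (U : Λ → Q → ℝ) (a : Λ → ℝ) (ζ : Λ) (q : Q) : ℝ :=
  pEE μ U a ζ q / pQm μ U a q

/-- Conditional variance of `F` given `q`. -/
noncomputable def condVar [Fintype Λ] [MeasurableSpace Q] (μ : Measure Q)
    (U : Λ → Q → ℝ) (a : Λ → ℝ) (F : Λ → Q → ℝ) (q : Q) : ℝ :=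
  ∑ ζ : Λ, F ζ q ^ 2 * wA μ U a ζ q - (∑ ζ : Λ, F ζ q * wA μ U a ζ q) ^ 2

/-- Expectation with respect to the marginal of `q`: `E_a^𝒬[h] = ∫ h(q) p_a^𝒬(q) dμ(q)`. -/
noncomputable def EQm [Fintype Λ] [MeasurableSpace Q] (μ : Measure Q)
    (U : Λ → Q → ℝ) (a : Λ → ℝ) (h : Q → ℝ) : ℝ :=
  ∫ q, h q * pQm μ U a q ∂μ

/-- Variance with respect to the marginal of `q`. -/
noncomputable def VarQ [Fintype Λ] [MeasurableSpace Q] (μ : Measure Q)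
    (U : Λ → Q → ℝ) (a : Λ → ℝ) (h : Q → ℝ) : ℝ :=
  EQm μ U a (fun q => h q ^ 2) - (EQm μ U a h) ^ 2

/-- Partition function of the unbiased expanded ensemble. -/
noncomputable def Z0 [Fintype Λ] [MeasurableSpace Q] (μ : Measure Q)
    (U : Λ → Q → ℝ) : ℝ :=
  ∑ ζ : Λ, ∫ q, Real.exp (-U ζ q) ∂μ

/-- Unbiased expanded-ensemble density `p_0(ζ,q) = exp(−U(ζ,q))/Z_0`. -/
noncomputable def p0 [Fintype Λ] [MeasurableSpace Q] (μ : Measure Q)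
    (U : Λ → Q → ℝ) (ζ : Λ) (q : Q) : ℝ :=
  Real.exp (-U ζ q) / Z0 μ U

/-- Unbiased total expectation `E[O] = Σ_ζ ∫ O(ζ,q) p_0(ζ,q) dμ(q)`. -/
noncomputable def E0 [Fintype Λ] [MeasurableSpace Q] (μ : Measure Q)
    (U : Λ → Q → ℝ) (O : Λ → Q → ℝ) : ℝ :=
  ∑ ζ : Λ, ∫ q, O ζ q * p0 μ U ζ q ∂μ

/-- Modified generic weighing function `𝕘_a^λ(ζ,q) = exp(−a(λ)) g_a^λ(ζ,q)`. -/
noncomputable def gMod [Fintype Λ] [MeasurableSpace Q] (μ : Measure Q)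
    (U : Λ → Q → ℝ) (a : Λ → ℝ) (K : Λ → Λ → ℝ) (l ζ : Λ) (q : Q) : ℝ :=
  Real.exp (-a l) * gW μ U a K l ζ q

/-- Total modified weighing function `𝕘_a = Σ_λ 𝕘_a^λ`. -/
noncomputable def gModT [Fintype Λ] [MeasurableSpace Q] (μ : Measure Q)
    (U : Λ → Q → ℝ) (a : Λ → ℝ) (K : Λ → Λ → ℝ) (ζ : Λ) (q : Q) : ℝ :=
  ∑ l : Λ, gMod μ U a K l ζ q

/-- Conditioned modified weighing function
`𝕟_a^λ(q) = exp(−U(λ,q)) / Σ_ζ exp(a(ζ) − U(ζ,q))`. -/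
noncomputable def nMod [Fintype Λ] (U : Λ → Q → ℝ) (a : Λ → ℝ) (l : Λ) (q : Q) : ℝ :=
  Real.exp (-U l q) / ∑ ζ : Λ, Real.exp (a ζ - U ζ q)

/-- Total conditioned modified weighing function `𝕟_a = Σ_λ 𝕟_a^λ`. -/
noncomputable def nModT [Fintype Λ] (U : Λ → Q → ℝ) (a : Λ → ℝ) (q : Q) : ℝ :=
  ∑ l : Λ, nMod U a l q

end ExpandedEnsemble

open MeasureTheory ExpandedEnsemble

section Aux
set_option linter.unusedSectionVars false
set_option linter.unusedVariables false

open Finset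

variable {Λ Q : Type*} [Fintype Λ] [Nonempty Λ] [MeasurableSpace Q]
  {μ : Measure Q} {U : Λ → Q → ℝ} {a : Λ → ℝ}

lemma S_pos' (U : Λ → Q → ℝ) (a : Λ → ℝ) (q : Q) :
    0 < ∑ ζ : Λ, Real.exp (a ζ - U ζ q) :=
  Finset.sum_pos (fun ζ _ => Real.exp_pos _) Finset.univ_nonempty

lemma pEE_pos' (hZ : 0 < Za μ U a) (ζ : Λ) (q : Q) : 0 < pEE μ U a ζ q :=
  div_pos (Real.exp_pos _) hZ

lemma pQm_pos' (hZ : 0 < Za μ U a) (q : Q) : 0 < pQm μ U a q :=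
  Finset.sum_pos (fun ζ _ => pEE_pos' hZ ζ q) Finset.univ_nonempty

lemma pEE_le_pQm' (hZ : 0 < Za μ U a) (ζ : Λ) (q : Q) :
    pEE μ U a ζ q ≤ pQm μ U a q :=
  Finset.single_le_sum (f := fun ζ => pEE μ U a ζ q)
    (fun ζ _ => (pEE_pos' hZ ζ q).le) (Finset.mem_univ ζ)

lemma gMod_mul_pEE (hZ : 0 < Za μ U a) (K : Λ → Λ → ℝ) (l ζ : Λ) (q : Q) :
    gMod μ U a K l ζ q * pEE μ U a ζ q = Real.exp (-U l q) / Za μ U a * K l ζ := by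
  have h1 : pEE μ U a ζ q ≠ 0 := (pEE_pos' hZ ζ q).ne'
  unfold gMod gW
  have h2 : Real.exp (-a l) * (pEE μ U a l q / pEE μ U a ζ q * K l ζ) * pEE μ U a ζ q
      = Real.exp (-a l) * pEE μ U a l q * K l ζ := by
    field_simp
  rw [h2]
  unfold pEE
  rw [mul_div_assoc', ← Real.exp_add, show -a l + (a l - U l q) = -U l q from by ring]

lemma nMod_mul_pQm (U : Λ → Q → ℝ) (a : Λ → ℝ) (l : Λ) (q : Q) :
    nMod U a l q * pQm μ U a q = Real.exp (-U l q) / Za μ U a := by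
  have hS : (∑ ζ : Λ, Real.exp (a ζ - U ζ q)) ≠ 0 := (S_pos' U a q).ne'
  have hq : pQm μ U a q = (∑ ζ : Λ, Real.exp (a ζ - U ζ q)) / Za μ U a := by
    unfold pQm pEE; rw [Finset.sum_div]
  rw [hq]
  unfold nMod
  field_simp

lemma Ea_eq_integral (F : Λ → Q → ℝ) (G : Q → ℝ)
    (hF : ∀ ζ : Λ, Integrable (fun q => F ζ q * pEE μ U a ζ q) μ)
    (hFG : ∀ q, ∑ ζ : Λ, F ζ q * pEE μ U a ζ q = G q) :
    Ea μ U a F = ∫ q, G q ∂μ := by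
  unfold Ea
  rw [← MeasureTheory.integral_finset_sum _ (fun ζ _ => hF ζ)]
  exact integral_congr_ae (Filter.Eventually.of_forall hFG)

end Aux

/-- **Variance reduction for free energy estimation.**  (i) `E_a[𝕟_a^λ] = E_a[𝕘_a^λ]`
and `E_a[𝕟_a] = E_a[𝕘_a]`; (ii) the law of total variance for
`𝕘_a^λ/E_a[𝕘_a^λ] − 𝕘_a/E_a[𝕘_a]`; (iii) if the expected conditional variance is
positive, the asymptotic variance of the adiabatic reweighting free energy estimator
is strictly smaller than that of the thermodynamic occupation and free energy
perturbation estimators. -/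
theorem variance_reduction_free_energy
    {Λ Q : Type*} [Fintype Λ] [Nonempty Λ] [MeasurableSpace Q]
    (μ : Measure Q) [SigmaFinite μ]
    (U : Λ → Q → ℝ) (hU : ∀ ζ, Measurable (U ζ)) (a : Λ → ℝ)
    (hInt : ∀ ζ, Integrable (fun q => Real.exp (a ζ - U ζ q)) μ)
    (hZ : 0 < Za μ U a)
    (hInt0 : ∀ ζ, Integrable (fun q => Real.exp (-U ζ q)) μ)
    (hZ0 : 0 < Z0 μ U)
    (K : Λ → Λ → ℝ) (hK : ∀ l : Λ, ∑ ζ : Λ, K l ζ = 1)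
    (l : Λ)
    (hsq1 : ∀ ζ, Integrable (fun q => gMod μ U a K l ζ q ^ 2 * pEE μ U a ζ q) μ)
    (hsq2 : ∀ ζ, Integrable (fun q => gModT μ U a K ζ q ^ 2 * pEE μ U a ζ q) μ) :
    (Ea μ U a (fun _ q => nMod U a l q) = Ea μ U a (gMod μ U a K l)
      ∧ Ea μ U a (fun _ q => nModT U a q) = Ea μ U a (gModT μ U a K))
    ∧ VarA μ U a (fun ζ q =>
          gMod μ U a K l ζ q / Ea μ U a (gMod μ U a K l)
            - gModT μ U a K ζ q / Ea μ U a (gModT μ U a K))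
        = EQm μ U a (condVar μ U a (fun ζ q =>
            gMod μ U a K l ζ q / Ea μ U a (gMod μ U a K l)
              - gModT μ U a K ζ q / Ea μ U a (gModT μ U a K)))
          + VarA μ U a (fun _ q =>
              nMod U a l q / Ea μ U a (fun _ q' => nMod U a l q')
                - nModT U a q / Ea μ U a (fun _ q' => nModT U a q'))
    ∧ (0 < EQm μ U a (condVar μ U a (fun ζ q =>
            gMod μ U a K l ζ q / Ea μ U a (gMod μ U a K l)
              - gModT μ U a K ζ q / Ea μ U a (gModT μ U a K))) →
        VarA μ U a (fun _ q =>
            nMod U a l q / Ea μ U a (fun _ q' => nMod U a l q')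
              - nModT U a q / Ea μ U a (fun _ q' => nModT U a q'))
          < VarA μ U a (fun ζ q =>
              gMod μ U a K l ζ q / Ea μ U a (gMod μ U a K l)
                - gModT μ U a K ζ q / Ea μ U a (gModT μ U a K))) := by
  classical
  -- positivity facts
  have hSpos : ∀ q, 0 < ∑ ζ : Λ, Real.exp (a ζ - U ζ q) := S_pos' U a
  have hpEE : ∀ (ζ : Λ) (q : Q), 0 < pEE μ U a ζ q := pEE_pos' hZ
  have hpQm : ∀ q, 0 < pQm μ U a q := pQm_pos' hZ
  -- measurability
  have mpEE : ∀ ζ : Λ, Measurable (fun q => pEE μ U a ζ q) := fun ζ =>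
    ((measurable_const.sub (hU ζ)).exp).div_const _
  have mS : Measurable (fun q => ∑ ζ : Λ, Real.exp (a ζ - U ζ q)) :=
    Finset.measurable_sum _ fun ζ _ => (measurable_const.sub (hU ζ)).exp
  have mn : ∀ l' : Λ, Measurable (fun q => nMod U a l' q) := by
    intro l'; unfold nMod; exact ((hU l').neg.exp).div mS
  have mnT : Measurable (fun q => nModT U a q) := by
    unfold nModT; exact Finset.measurable_sum _ fun l' _ => mn l'
  have mg : ∀ (l' ζ : Λ), Measurable (fun q => gMod μ U a K l' ζ q) := by
    intro l' ζ; unfold gMod gW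
    exact ((((mpEE l').div (mpEE ζ)).mul_const _).const_mul _)
  have mgT : ∀ ζ : Λ, Measurable (fun q => gModT μ U a K ζ q) := by
    intro ζ; unfold gModT; exact Finset.measurable_sum _ fun l' _ => mg l' ζ
  -- pointwise products
  have pwg : ∀ (l' ζ : Λ) (q : Q), gMod μ U a K l' ζ q * pEE μ U a ζ q
      = Real.exp (-U l' q) / Za μ U a * K l' ζ := fun l' ζ q => gMod_mul_pEE hZ K l' ζ q
  have pwn : ∀ (l' : Λ) (q : Q), nMod U a l' q * pQm μ U a q
      = Real.exp (-U l' q) / Za μ U a := fun l' q => nMod_mul_pQm U a l' q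
  have pw_sum_g : ∀ (l' : Λ) (q : Q), ∑ ζ : Λ, gMod μ U a K l' ζ q * pEE μ U a ζ q
      = Real.exp (-U l' q) / Za μ U a := by
    intro l' q
    simp only [pwg]
    rw [← Finset.mul_sum, hK l', mul_one]
  have pw_sum_gT : ∀ q : Q, ∑ ζ : Λ, gModT μ U a K ζ q * pEE μ U a ζ q
      = ∑ l' : Λ, Real.exp (-U l' q) / Za μ U a := by
    intro q
    unfold gModT
    simp only [Finset.sum_mul]
    rw [Finset.sum_comm]
    exact Finset.sum_congr rfl fun l' _ => pw_sum_g l' q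
  have pw_nT : ∀ q : Q, nModT U a q * pQm μ U a q
      = ∑ l' : Λ, Real.exp (-U l' q) / Za μ U a := by
    intro q
    unfold nModT
    rw [Finset.sum_mul]
    exact Finset.sum_congr rfl fun l' _ => pwn l' q
  -- integrability of the basic products
  have iexp : ∀ l' : Λ, Integrable (fun q => Real.exp (-U l' q) / Za μ U a) μ :=
    fun l' => (hInt0 l').div_const _
  have ig : ∀ (l' ζ : Λ), Integrable (fun q => gMod μ U a K l' ζ q * pEE μ U a ζ q) μ := by
    intro l' ζ
    have h : (fun q => gMod μ U a K l' ζ q * pEE μ U a ζ q)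
        = fun q => Real.exp (-U l' q) / Za μ U a * K l' ζ := funext fun q => pwg l' ζ q
    rw [h]; exact (iexp l').mul_const _
  have igT : ∀ ζ : Λ, Integrable (fun q => gModT μ U a K ζ q * pEE μ U a ζ q) μ := by
    intro ζ
    have h : (fun q => gModT μ U a K ζ q * pEE μ U a ζ q)
        = fun q => ∑ l' : Λ, gMod μ U a K l' ζ q * pEE μ U a ζ q := by
      funext q; unfold gModT; rw [Finset.sum_mul]
    rw [h]; exact integrable_finset_sum _ fun l' _ => ig l' ζ
  have inm : ∀ (l' ζ : Λ), Integrable (fun q => nMod U a l' q * pEE μ U a ζ q) μ := by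
    intro l' ζ
    refine (iexp l').mono' ((mn l').mul (mpEE ζ)).aestronglyMeasurable
      (Filter.Eventually.of_forall fun q => ?_)
    have h0 : 0 ≤ nMod U a l' q := div_nonneg (Real.exp_pos _).le (hSpos q).le
    rw [Real.norm_eq_abs, abs_of_nonneg (mul_nonneg h0 (hpEE ζ q).le)]
    calc nMod U a l' q * pEE μ U a ζ q ≤ nMod U a l' q * pQm μ U a q :=
          mul_le_mul_of_nonneg_left (pEE_le_pQm' hZ ζ q) h0
      _ = Real.exp (-U l' q) / Za μ U a := pwn l' q
  have inT : ∀ ζ : Λ, Integrable (fun q => nModT U a q * pEE μ U a ζ q) μ := by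
    intro ζ
    have h : (fun q => nModT U a q * pEE μ U a ζ q)
        = fun q => ∑ l' : Λ, nMod U a l' q * pEE μ U a ζ q := by
      funext q; unfold nModT; rw [Finset.sum_mul]
    rw [h]; exact integrable_finset_sum _ fun l' _ => inm l' ζ
  -- part (i)
  have EaG : ∀ l' : Λ, Ea μ U a (gMod μ U a K l')
      = ∫ q, Real.exp (-U l' q) / Za μ U a ∂μ :=
    fun l' => Ea_eq_integral _ _ (fun ζ => ig l' ζ) (fun q => pw_sum_g l' q)
  have EaN : ∀ l' : Λ, Ea μ U a (fun _ q => nMod U a l' q)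
      = ∫ q, Real.exp (-U l' q) / Za μ U a ∂μ := by
    intro l'
    refine Ea_eq_integral _ _ (fun ζ => inm l' ζ) fun q => ?_
    show ∑ ζ : Λ, nMod U a l' q * pEE μ U a ζ q = _
    rw [← Finset.mul_sum, show (∑ ζ : Λ, pEE μ U a ζ q) = pQm μ U a q from rfl]
    exact pwn l' q
  have EaGT : Ea μ U a (gModT μ U a K)
      = ∫ q, ∑ l' : Λ, Real.exp (-U l' q) / Za μ U a ∂μ :=
    Ea_eq_integral _ _ (fun ζ => igT ζ) (fun q => pw_sum_gT q)
  have EaNT : Ea μ U a (fun _ q => nModT U a q)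
      = ∫ q, ∑ l' : Λ, Real.exp (-U l' q) / Za μ U a ∂μ := by
    refine Ea_eq_integral _ _ (fun ζ => inT ζ) fun q => ?_
    show ∑ ζ : Λ, nModT U a q * pEE μ U a ζ q = _
    rw [← Finset.mul_sum, show (∑ ζ : Λ, pEE μ U a ζ q) = pQm μ U a q from rfl]
    exact pw_nT q
  have e1 : Ea μ U a (fun _ q => nMod U a l q) = Ea μ U a (gMod μ U a K l) :=
    (EaN l).trans (EaG l).symm
  have e2 : Ea μ U a (fun _ q => nModT U a q) = Ea μ U a (gModT μ U a K) :=
    EaNT.trans EaGT.symm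
  rw [e1, e2]
  set c1 := Ea μ U a (gMod μ U a K l) with hc1
  set c2 := Ea μ U a (gModT μ U a K) with hc2
  set F : Λ → Q → ℝ := fun ζ q => gMod μ U a K l ζ q / c1 - gModT μ U a K ζ q / c2 with hF
  -- conditional weights
  have hsumw : ∀ q : Q, ∑ ζ : Λ, wA μ U a ζ q = 1 := by
    intro q
    unfold wA
    rw [← Finset.sum_div, show (∑ ζ : Λ, pEE μ U a ζ q) = pQm μ U a q from rfl,
      div_self (hpQm q).ne']
  -- pointwise conditional mean
  have hmean : ∀ q : Q, ∑ ζ : Λ, F ζ q * pEE μ U a ζ q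
      = (nMod U a l q / c1 - nModT U a q / c2) * pQm μ U a q := by
    intro q
    have h : ∀ ζ : Λ, F ζ q * pEE μ U a ζ q
        = gMod μ U a K l ζ q * pEE μ U a ζ q / c1
          - gModT μ U a K ζ q * pEE μ U a ζ q / c2 := by
      intro ζ; simp only [hF]; ring
    simp only [h]
    rw [Finset.sum_sub_distrib, ← Finset.sum_div, ← Finset.sum_div, pw_sum_g l q,
      pw_sum_gT q, ← pwn l q, ← pw_nT q]
    ring
  have hFw : ∀ q : Q, ∑ ζ : Λ, F ζ q * wA μ U a ζ q
      = nMod U a l q / c1 - nModT U a q / c2 := by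
    intro q
    have h : ∀ ζ : Λ, F ζ q * wA μ U a ζ q = F ζ q * pEE μ U a ζ q / pQm μ U a q := by
      intro ζ; unfold wA; ring
    simp only [h]
    rw [← Finset.sum_div, hmean q, mul_div_assoc, div_self (hpQm q).ne', mul_one]
  have hF2w : ∀ q : Q, (∑ ζ : Λ, F ζ q ^ 2 * wA μ U a ζ q) * pQm μ U a q
      = ∑ ζ : Λ, F ζ q ^ 2 * pEE μ U a ζ q := by
    intro q
    rw [Finset.sum_mul]
    refine Finset.sum_congr rfl fun ζ _ => ?_
    unfold wA
    field_simp
    exact mul_div_cancel_right₀ _ (hpQm q).ne'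
  have hF2sum : ∀ q : Q, ∑ ζ : Λ, F ζ q ^ 2 * pEE μ U a ζ q
      = (condVar μ U a F q + (nMod U a l q / c1 - nModT U a q / c2) ^ 2) * pQm μ U a q := by
    intro q
    unfold condVar
    rw [hFw q, ← hF2w q]
    ring
  -- Cauchy–Schwarz bound
  have hCS : ∀ q : Q, (nMod U a l q / c1 - nModT U a q / c2) ^ 2 * pQm μ U a q
      ≤ ∑ ζ : Λ, F ζ q ^ 2 * pEE μ U a ζ q := by
    intro q
    have hw0 : ∀ ζ : Λ, 0 ≤ wA μ U a ζ q := fun ζ =>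
      div_nonneg (hpEE ζ q).le (hpQm q).le
    have cs := Finset.sum_sq_le_sum_mul_sum_of_sq_eq_mul Finset.univ
      (r := fun ζ => F ζ q * wA μ U a ζ q) (f := fun ζ => F ζ q ^ 2 * wA μ U a ζ q)
      (g := fun ζ => wA μ U a ζ q)
      (fun ζ _ => mul_nonneg (sq_nonneg _) (hw0 ζ)) (fun ζ _ => hw0 ζ)
      (fun ζ _ => by ring)
    rw [hFw q, hsumw q, mul_one] at cs
    calc (nMod U a l q / c1 - nModT U a q / c2) ^ 2 * pQm μ U a q
        ≤ (∑ ζ : Λ, F ζ q ^ 2 * wA μ U a ζ q) * pQm μ U a q :=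
          mul_le_mul_of_nonneg_right cs (hpQm q).le
      _ = ∑ ζ : Λ, F ζ q ^ 2 * pEE μ U a ζ q := hF2w q
  -- integrability for F
  have iF : ∀ ζ : Λ, Integrable (fun q => F ζ q * pEE μ U a ζ q) μ := by
    intro ζ
    have h : (fun q => F ζ q * pEE μ U a ζ q)
        = fun q => gMod μ U a K l ζ q * pEE μ U a ζ q / c1
          - gModT μ U a K ζ q * pEE μ U a ζ q / c2 := by
      funext q; simp only [hF]; ring
    rw [h]; exact ((ig l ζ).div_const _).sub ((igT ζ).div_const _)
  have mF : ∀ ζ : Λ, Measurable (fun q => F ζ q) := by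
    intro ζ; simp only [hF]
    exact ((mg l ζ).div_const _).sub ((mgT ζ).div_const _)
  have iF2 : ∀ ζ : Λ, Integrable (fun q => F ζ q ^ 2 * pEE μ U a ζ q) μ := by
    intro ζ
    refine (((hsq1 ζ).const_mul (2 / c1 ^ 2)).add ((hsq2 ζ).const_mul (2 / c2 ^ 2))).mono'
      (((mF ζ).pow_const 2).mul (mpEE ζ)).aestronglyMeasurable
      (Filter.Eventually.of_forall fun q => ?_)
    have hp : (0:ℝ) ≤ pEE μ U a ζ q := (hpEE ζ q).le
    rw [Real.norm_eq_abs, abs_of_nonneg (mul_nonneg (sq_nonneg _) hp)]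
    simp only [hF, Pi.add_apply]
    have e1' : 2 / c1 ^ 2 * (gMod μ U a K l ζ q ^ 2 * pEE μ U a ζ q)
        = 2 * (gMod μ U a K l ζ q / c1) ^ 2 * pEE μ U a ζ q := by
      rw [div_pow]; ring
    have e2' : 2 / c2 ^ 2 * (gModT μ U a K ζ q ^ 2 * pEE μ U a ζ q)
        = 2 * (gModT μ U a K ζ q / c2) ^ 2 * pEE μ U a ζ q := by
      rw [div_pow]; ring
    rw [e1', e2']
    nlinarith [mul_nonneg (sq_nonneg (gMod μ U a K l ζ q / c1 + gModT μ U a K ζ q / c2)) hp]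
  have iG2 : Integrable (fun q => ∑ ζ : Λ, F ζ q ^ 2 * pEE μ U a ζ q) μ :=
    integrable_finset_sum _ fun ζ _ => iF2 ζ
  -- integrability for the conditioned function
  have mh : Measurable (fun q => nMod U a l q / c1 - nModT U a q / c2) :=
    ((mn l).div_const _).sub (mnT.div_const _)
  have iN1 : ∀ ζ : Λ, Integrable
      (fun q => (nMod U a l q / c1 - nModT U a q / c2) * pEE μ U a ζ q) μ := by
    intro ζ
    have h : (fun q => (nMod U a l q / c1 - nModT U a q / c2) * pEE μ U a ζ q)
        = fun q => nMod U a l q * pEE μ U a ζ q / c1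
          - nModT U a q * pEE μ U a ζ q / c2 := by
      funext q; ring
    rw [h]; exact ((inm l ζ).div_const _).sub ((inT ζ).div_const _)
  have iN2 : ∀ ζ : Λ, Integrable
      (fun q => (nMod U a l q / c1 - nModT U a q / c2) ^ 2 * pEE μ U a ζ q) μ := by
    intro ζ
    refine iG2.mono' ((mh.pow_const 2).mul (mpEE ζ)).aestronglyMeasurable
      (Filter.Eventually.of_forall fun q => ?_)
    rw [Real.norm_eq_abs, abs_of_nonneg (mul_nonneg (sq_nonneg _) (hpEE ζ q).le)]
    calc (nMod U a l q / c1 - nModT U a q / c2) ^ 2 * pEE μ U a ζ q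
        ≤ (nMod U a l q / c1 - nModT U a q / c2) ^ 2 * pQm μ U a q :=
          mul_le_mul_of_nonneg_left (pEE_le_pQm' hZ ζ q) (sq_nonneg _)
      _ ≤ ∑ ζ : Λ, F ζ q ^ 2 * pEE μ U a ζ q := hCS q
  have ihB : Integrable
      (fun q => (nMod U a l q / c1 - nModT U a q / c2) ^ 2 * pQm μ U a q) μ := by
    refine iG2.mono' ((mh.pow_const 2).mul
      (Finset.measurable_sum _ fun ζ _ => mpEE ζ)).aestronglyMeasurable
      (Filter.Eventually.of_forall fun q => ?_)
    rw [Real.norm_eq_abs, abs_of_nonneg (mul_nonneg (sq_nonneg _) (hpQm q).le)]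
    exact hCS q
  have icv : Integrable (fun q => condVar μ U a F q * pQm μ U a q) μ := by
    have h : (fun q => condVar μ U a F q * pQm μ U a q)
        = fun q => (∑ ζ : Λ, F ζ q ^ 2 * pEE μ U a ζ q)
          - (nMod U a l q / c1 - nModT U a q / c2) ^ 2 * pQm μ U a q := by
      funext q; rw [hF2sum q]; ring
    rw [h]; exact iG2.sub ihB
  -- the four expectations
  have EaF1 : Ea μ U a F
      = ∫ q, (nMod U a l q / c1 - nModT U a q / c2) * pQm μ U a q ∂μ :=
    Ea_eq_integral _ _ iF hmean
  have EaF2 : Ea μ U a (fun ζ q => F ζ q ^ 2)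
      = EQm μ U a (condVar μ U a F)
        + ∫ q, (nMod U a l q / c1 - nModT U a q / c2) ^ 2 * pQm μ U a q ∂μ := by
    have h1 : Ea μ U a (fun ζ q => F ζ q ^ 2)
        = ∫ q, (condVar μ U a F q
            + (nMod U a l q / c1 - nModT U a q / c2) ^ 2) * pQm μ U a q ∂μ :=
      Ea_eq_integral _ _ iF2 hF2sum
    rw [h1]
    unfold EQm
    simp only [add_mul]
    exact integral_add icv ihB
  have EaN1 : Ea μ U a (fun (_ : Λ) q => nMod U a l q / c1 - nModT U a q / c2)
      = ∫ q, (nMod U a l q / c1 - nModT U a q / c2) * pQm μ U a q ∂μ := by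
    refine Ea_eq_integral _ _ iN1 fun q => ?_
    show ∑ ζ : Λ, (nMod U a l q / c1 - nModT U a q / c2) * pEE μ U a ζ q = _
    rw [← Finset.mul_sum, show (∑ ζ : Λ, pEE μ U a ζ q) = pQm μ U a q from rfl]
  have EaN2 : Ea μ U a (fun (_ : Λ) q => (nMod U a l q / c1 - nModT U a q / c2) ^ 2)
      = ∫ q, (nMod U a l q / c1 - nModT U a q / c2) ^ 2 * pQm μ U a q ∂μ := by
    refine Ea_eq_integral _ _ iN2 fun q => ?_
    show ∑ ζ : Λ, (nMod U a l q / c1 - nModT U a q / c2) ^ 2 * pEE μ U a ζ q = _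
    rw [← Finset.mul_sum, show (∑ ζ : Λ, pEE μ U a ζ q) = pQm μ U a q from rfl]
  -- law of total variance
  have hA : VarA μ U a F
      = EQm μ U a (condVar μ U a F)
        + VarA μ U a (fun (_ : Λ) q => nMod U a l q / c1 - nModT U a q / c2) := by
    simp only [VarA]
    rw [EaF2, EaF1, EaN2, EaN1]
    ring
  exact ⟨⟨rfl, rfl⟩, hA, fun hpos => by rw [hA]; linarith⟩
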